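/- Categorical data with missing data can be contextual: there exists a table T : Fin 16 → (Option Bool)^4 whose available-case pairwise marginal counts for the four contexts {A,B}, {A,B'}, {A',B}, {A',B'} form a compatible family (all four one-variable available-case marginals over each context agree on overlaps up to proportion) but which cannot be realized as the exact pairwise marginal counts of any complete table T' : Fin 8 → Bool^4 with no missing data. -/
import Mathlib


/-- A row of a table with possibly missing binary data in columns A, B, A', B'. -/
abbrev Row5 := Option Bool × Option Bool × Option Bool × Option Bool

/-- Available-case pairwise marginal count of two columns of a 16-row table. -/
def acount (T : Fin 16 → Row5) (f g : Row5 → Option Bool) (x y : Bool) : ℕ :=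
  (Finset.univ.filter (fun i => f (T i) = some x ∧ g (T i) = some y)).card

/-- One-variable marginal (onto the first column of the pair) of the
available-case pairwise count of a context. -/
def acmarg1 (T : Fin 16 → Row5) (f g : Row5 → Option Bool) (x : Bool) : ℕ :=
  acount T f g x false + acount T f g x true

/-- Total count of a context pairwise table. -/
def actot (T : Fin 16 → Row5) (f g : Row5 → Option Bool) : ℕ :=
  acmarg1 T f g false + acmarg1 T f g true

/-- Exact pairwise marginal count of a complete 8-row table. -/
def cmarg (T' : Fin 8 → Bool × Bool × Bool × Bool)
    (f g : Bool × Bool × Bool × Bool → Bool) (x y : Bool) : ℕ :=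
  (Finset.univ.filter (fun i => f (T' i) = x ∧ g (T' i) = y)).card

def cA : Row5 → Option Bool := fun r => r.1
def cB : Row5 → Option Bool := fun r => r.2.1
def cA' : Row5 → Option Bool := fun r => r.2.2.1
def cB' : Row5 → Option Bool := fun r => r.2.2.2

/-- The witness table (Table 2 of the paper): 16 rows with values (A, B, A', B'). -/
def T0 : Fin 16 → Row5 :=
  ![(some false, some false, none, some false),
    (some false, some false, none, some false),
    (some false, some false, none, some false),
    (some false, some false, none, some true),
    (some true, some true, none, some false),
    (some true, some true, none, some true),
    (some true, some true, none, some true),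
    (some true, some true, none, some true),
    (none, some false, some false, some true),
    (none, some false, some false, some true),
    (none, some false, some false, some true),
    (none, some true, some false, some false),
    (none, some false, some true, some false),
    (none, some true, some true, some false),
    (none, some true, some true, some false),
    (none, some true, some true, some true)]

lemma card_ne_split (u v : Fin 8 → Bool) :
    (Finset.univ.filter (fun i => ¬ u i = v i)).card =
      (Finset.univ.filter (fun i => u i = true ∧ v i = false)).card +
      (Finset.univ.filter (fun i => u i = false ∧ v i = true)).card := by
  rw [← Finset.card_union_of_disjoint]
  · congr 1
    ext i
    simp only [Finset.mem_filter, Finset.mem_union, Finset.mem_univ, true_and]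
    cases u i <;> cases v i <;> simp
  · simp only [Finset.disjoint_left, Finset.mem_filter]
    rintro i ⟨-, hu, hv⟩ ⟨-, hu', hv'⟩
    rw [hu] at hu'; exact absurd hu' (by simp)

theorem missing_data_can_be_contextual :
    ∃ T : Fin 16 → Row5,
      -- compatibility on overlaps, up to proportion:
      -- contexts {A,B} and {A,B'} share A
      (∀ x : Bool, acmarg1 T cA cB x * actot T cA cB' =
        acmarg1 T cA cB' x * actot T cA cB) ∧
      -- contexts {A,B} and {A',B} share B
      (∀ x : Bool, acmarg1 T cB cA x * actot T cB cA' =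
        acmarg1 T cB cA' x * actot T cB cA) ∧
      -- contexts {A,B'} and {A',B'} share B'
      (∀ x : Bool, acmarg1 T cB' cA x * actot T cB' cA' =
        acmarg1 T cB' cA' x * actot T cB' cA) ∧
      -- contexts {A',B} and {A',B'} share A'
      (∀ x : Bool, acmarg1 T cA' cB x * actot T cA' cB' =
        acmarg1 T cA' cB' x * actot T cA' cB) ∧
      -- but no complete table realizes the available-case pairwise counts
      ¬ ∃ T' : Fin 8 → Bool × Bool × Bool × Bool,
          (∀ x y : Bool, cmarg T' (fun r => r.1) (fun r => r.2.1) x y =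
            acount T cA cB x y) ∧
          (∀ x y : Bool, cmarg T' (fun r => r.2.2.1) (fun r => r.2.1) x y =
            acount T cA' cB x y) ∧
          (∀ x y : Bool, cmarg T' (fun r => r.1) (fun r => r.2.2.2) x y =
            acount T cA cB' x y) ∧
          (∀ x y : Bool, cmarg T' (fun r => r.2.2.1) (fun r => r.2.2.2) x y =
            acount T cA' cB' x y) := by
  refine ⟨T0, by decide, by decide, by decide, by decide, ?_⟩
  rintro ⟨T', hAB, hA'B, hAB', hA'B'⟩
  -- the available-case counts of T0
  have eAB1 : acount T0 cA cB true false = 0 := by decide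
  have eAB2 : acount T0 cA cB false true = 0 := by decide
  have eA'B1 : acount T0 cA' cB true false = 1 := by decide
  have eA'B2 : acount T0 cA' cB false true = 1 := by decide
  have eAB'1 : acount T0 cA cB' true false = 1 := by decide
  have eAB'2 : acount T0 cA cB' false true = 1 := by decide
  have eA'B'1 : acount T0 cA' cB' true false = 3 := by decide
  have eA'B'2 : acount T0 cA' cB' false true = 3 := by decide
  -- A = B in every row of T'
  have hABeq : ∀ i, (T' i).1 = (T' i).2.1 := by
    intro i
    by_contra h
    have h1 := hAB true false
    have h2 := hAB false true
    rw [eAB1, cmarg, Finset.card_eq_zero, Finset.filter_eq_empty_iff] at h1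
    rw [eAB2, cmarg, Finset.card_eq_zero, Finset.filter_eq_empty_iff] at h2
    have h1' := h1 (Finset.mem_univ i)
    have h2' := h2 (Finset.mem_univ i)
    cases ha : (T' i).1 <;> cases hb : (T' i).2.1 <;>
      simp_all
  -- disagreement counts
  have c1 : (Finset.univ.filter (fun i => ¬ (T' i).2.2.1 = (T' i).2.1)).card = 2 := by
    rw [card_ne_split]
    have := hA'B true false; have := hA'B false true
    simp only [cmarg] at *
    omega
  have c2 : (Finset.univ.filter (fun i => ¬ (T' i).1 = (T' i).2.2.2)).card = 2 := by
    rw [card_ne_split]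
    have := hAB' true false; have := hAB' false true
    simp only [cmarg] at *
    omega
  have c3 : (Finset.univ.filter (fun i => ¬ (T' i).2.2.1 = (T' i).2.2.2)).card = 6 := by
    rw [card_ne_split]
    have := hA'B' true false; have := hA'B' false true
    simp only [cmarg] at *
    omega
  -- subset relation: A'≠B' implies A'≠B or A≠B'
  have hsub : (Finset.univ.filter (fun i => ¬ (T' i).2.2.1 = (T' i).2.2.2)) ⊆
      (Finset.univ.filter (fun i => ¬ (T' i).2.2.1 = (T' i).2.1)) ∪
      (Finset.univ.filter (fun i => ¬ (T' i).1 = (T' i).2.2.2)) := by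
    intro i hi
    simp only [Finset.mem_filter, Finset.mem_union, Finset.mem_univ, true_and] at *
    by_contra h
    push_neg at h
    obtain ⟨h1, h2⟩ := h
    exact hi (h1.trans ((hABeq i).symm.trans h2))
  have := (Finset.card_le_card hsub).trans (Finset.card_union_le _ _)
  omega
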